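/- arXiv:1611.10234 — 4 statements merged into one kernel-verified Lean document; each statement's English description precedes it below -/
import Mathlib

section
/- Let m ≥ 1 and f(z) = z + Σ_{n≥m+1} aₙ zⁿ be a starlike function on the unit disk (f nonvanishing off 0, Re(z f'(z)/f(z)) > 0 off 0). Then |z|/(1+|z|^m)^{2/m} ≤ |f(z)| ≤ |z|/(1−|z|^m)^{2/m} for all z ∈ 𝔻. -/
set_option maxHeartbeats 1000000
open Complex Metric Set Function

theorem lemA (m : ℕ) (w B : ℂ → ℂ) (hB : DifferentiableOn ℂ B (ball (0:ℂ) 1))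
    (hwB : ∀ z ∈ ball (0:ℂ) 1, w z = z ^ m * B z)
    (hw1 : ∀ z ∈ ball (0:ℂ) 1, ‖w z‖ < 1) :
    ∀ z ∈ ball (0:ℂ) 1, ‖B z‖ ≤ 1 := by
  intro z hz
  rw [mem_ball, dist_zero_right] at hz
  suffices H : ∀ᶠ r in nhdsWithin 1 (Set.Iio 1), ‖B z‖ ≤ 1 / r ^ m by
    refine ge_of_tendsto ?_ H
    have : Filter.Tendsto (fun r : ℝ => 1 / r ^ m) (nhdsWithin 1 (Set.Iio 1)) (nhds (1 / 1 ^ m)) := by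
      apply Filter.Tendsto.mono_left _ nhdsWithin_le_nhds
      exact (tendsto_const_nhds.div ((continuous_pow m).tendsto 1) (by norm_num))
    simpa using this
  filter_upwards [Ioo_mem_nhdsLT_of_mem ⟨hz, le_rfl⟩] with r hr
  have hr0 : 0 < r := lt_of_le_of_lt (norm_nonneg z) hr.1
  have hd : DiffContOnCl ℂ B (ball 0 r) := by
    refine DifferentiableOn.diffContOnCl ?_
    rw [closure_ball (0:ℂ) hr0.ne']
    exact hB.mono (closedBall_subset_ball (by simpa using hr.2))
  refine norm_le_of_forall_mem_frontier_norm_le isBounded_ball hd ?_ ?_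
  · rw [frontier_ball (0:ℂ) hr0.ne']
    intro x hx
    have hxr : ‖x‖ = r := by simpa [mem_sphere_iff_norm] using hx
    have hxball : x ∈ ball (0:ℂ) 1 := by
      rw [mem_ball, dist_zero_right, hxr]; exact hr.2
    have hwx := hw1 x hxball
    rw [hwB x hxball] at hwx
    rw [norm_mul, norm_pow, hxr] at hwx
    rw [le_div_iff₀ (by positivity : (0:ℝ) < r ^ m)]
    nlinarith [norm_nonneg (B x)]
  · rw [closure_ball (0:ℂ) hr0.ne', mem_closedBall, dist_zero_right]
    exact hr.1.le

theorem lemB (m : ℕ) (φ : ℂ → ℂ) (hval : ∀ k < m, (swap dslope (0:ℂ))^[k] φ 0 = 0) :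
    ∀ z, φ z = z ^ m * (swap dslope (0:ℂ))^[m] φ z := by
  induction m generalizing φ with
  | zero => simp
  | succ n ih =>
    intro z
    have h0 : φ 0 = 0 := hval 0 (Nat.succ_pos n)
    have hstep : φ z = z * dslope φ 0 z := by
      have := sub_smul_dslope φ (0:ℂ) z
      rw [sub_zero, h0, sub_zero] at this
      rw [← this]; simp [smul_eq_mul]
    have hval' : ∀ k < n, (swap dslope (0:ℂ))^[k] (dslope φ 0) 0 = 0 := by
      intro k hk
      have := hval (k + 1) (by omega)
      rwa [iterate_succ_apply] at this
    have := ih (dslope φ 0) hval' z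
    rw [hstep, this, iterate_succ_apply]
    show z * (z ^ n * (swap dslope 0)^[n] (dslope φ 0) z) = _
    rw [swap]
    ring

theorem lemBdiff (m : ℕ) (φ : ℂ → ℂ) (hφ : DifferentiableOn ℂ φ (ball (0:ℂ) 1)) :
    DifferentiableOn ℂ ((swap dslope (0:ℂ))^[m] φ) (ball (0:ℂ) 1) := by
  induction m generalizing φ with
  | zero => simpa
  | succ n ih =>
    rw [iterate_succ_apply]
    exact ih _ ((differentiableOn_dslope (ball_mem_nhds (0:ℂ) one_pos)).mpr hφ)

theorem lemC (f : ℂ → ℂ) (p : FormalMultilinearSeries ℂ ℂ ℂ) (hp : HasFPowerSeriesAt f p 0)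
    (k : ℕ) (h : iteratedDeriv k f 0 = 0) : (swap dslope (0:ℂ))^[k] f 0 = 0 := by
  have h1 := (hp.has_fpower_series_iterate_dslope_fslope k).coeff_zero (fun _ => 1)
  have h2 : (FormalMultilinearSeries.fslope^[k] p).coeff 0 = p.coeff k := by
    simpa using p.coeff_iterate_fslope k 0
  have h3 : p.coeff k = 0 := by
    obtain ⟨r, hr⟩ := hp
    have h4 := hr.factorial_smul (1:ℂ) k
    rw [← iteratedDeriv_eq_iteratedFDeriv, h] at h4
    have : (Nat.factorial k : ℂ) * p.coeff k = 0 := by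
      rw [← nsmul_eq_mul]; exact h4
    rcases mul_eq_zero.mp this with hc | hc
    · exact absurd hc (by exact_mod_cast Nat.factorial_ne_zero k)
    · exact hc
  rw [← h1]
  show (FormalMultilinearSeries.fslope^[k] p).coeff 0 = 0
  rw [h2, h3]

lemma dslope_sub_const (φ : ℂ → ℂ) (c : ℂ) : dslope (fun z => φ z - c) 0 = dslope φ 0 := by
  funext x
  by_cases hx : x = 0
  · subst hx
    simp only [dslope_same]
    exact deriv_sub_const c
  · rw [dslope_of_ne _ hx, dslope_of_ne _ hx, slope_def_field, slope_def_field]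
    ring_nf

lemma hasDerivAt_comp_real (f : ℂ → ℂ) (z₀ : ℂ) (t : ℝ)
    (hd : DifferentiableAt ℂ f ((t:ℂ)*z₀)) :
    HasDerivAt (fun s : ℝ => f ((s:ℂ) * z₀)) (z₀ * deriv f ((t:ℂ)*z₀)) t := by
  have h1 : HasDerivAt (fun s : ℝ => (s:ℂ) * z₀) z₀ t := by
    simpa using ((hasDerivAt_id ((t:ℝ):ℂ)).mul_const z₀).comp_ofReal
  have h2 := (hd.hasDerivAt.hasFDerivAt.restrictScalars ℝ).comp_hasDerivAt t h1
  simpa [smul_eq_mul, mul_comm, Function.comp_def] using h2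

lemma hasDerivAt_normSq_comp (F : ℝ → ℂ) (F' : ℂ) (t : ℝ) (hF : HasDerivAt F F' t) :
    HasDerivAt (fun s => Complex.normSq (F s))
      (2 * (((starRingEnd ℂ) (F t)) * F').re) t := by
  have hr : HasDerivAt (fun s => (F s).re) F'.re t := by
    simpa [Function.comp_def] using (Complex.reCLM.hasFDerivAt.comp_hasDerivAt t hF)
  have hi : HasDerivAt (fun s => (F s).im) F'.im t := by
    simpa [Function.comp_def] using (Complex.imCLM.hasFDerivAt.comp_hasDerivAt t hF)
  have := (hr.mul hr).add (hi.mul hi)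
  have he : (fun s => Complex.normSq (F s))
      = fun s => (F s).re * (F s).re + (F s).im * (F s).im := by
    funext s; simp [Complex.normSq_apply]
  rw [he]
  refine this.congr_deriv ?_
  simp [Complex.mul_re]
  ring

lemma lemRe1 (a t ρ : ℝ) (h2 : a ≤ t) (h1 : -t ≤ a) (h3 : t ≤ ρ) (h4 : ρ < 1) (h5 : 0 ≤ t) :
    (1-ρ)/(1+ρ) ≤ (1 - t^2)/(1-2*a+t^2) ∧ (1 - t^2)/(1-2*a+t^2) ≤ (1+ρ)/(1-ρ) := by
  have ht1 : t < 1 := lt_of_le_of_lt h3 h4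
  have hD : 0 < 1-2*a+t^2 := by nlinarith [sq_nonneg (1-t), sq_nonneg (1+t)]
  constructor
  · rw [div_le_div_iff₀ (by linarith) hD]
    nlinarith [mul_nonneg (sub_nonneg.2 h2) (sub_nonneg.2 h3), sq_nonneg (t - ρ), mul_nonneg (sub_nonneg.2 (le_trans h2 h3)) (sub_nonneg.2 (show t ≤ 1 from ht1.le))]
  · rw [div_le_div_iff₀ hD (by linarith)]
    nlinarith [mul_nonneg (by linarith : (0:ℝ) ≤ t + a) (by linarith : (0:ℝ) ≤ ρ - t), sq_nonneg (t+ρ)]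

-- Re of (1+ω)/(1-ω)
lemma re_moebius (ω : ℂ) (hω : ω ≠ 1) :
    (((1:ℂ) + ω)/(1 - ω)).re = (1 - ω.re^2 - ω.im^2)/(1 - 2*ω.re + (ω.re^2 + ω.im^2)) := by
  rw [Complex.div_re]
  have : Complex.normSq (1 - ω) = 1 - 2*ω.re + (ω.re^2+ω.im^2) := by
    simp [Complex.normSq_apply]; ring
  rw [this]
  simp only [Complex.add_re, Complex.one_re, Complex.sub_re, Complex.add_im, Complex.one_im,
    Complex.sub_im, zero_add, zero_sub]
  ring

lemma rePbounds (ω : ℂ) (ρ : ℝ) (hωρ : ‖ω‖ ≤ ρ) (hρ : ρ < 1) :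
    (1-ρ)/(1+ρ) ≤ (((1:ℂ)+ω)/(1-ω)).re ∧ (((1:ℂ)+ω)/(1-ω)).re ≤ (1+ρ)/(1-ρ) := by
  have hω1 : ω ≠ 1 := by
    intro hc; rw [hc] at hωρ; simp at hωρ; linarith
  rw [re_moebius ω hω1]
  have hsq : ‖ω‖^2 = ω.re^2 + ω.im^2 := by
    rw [Complex.sq_norm, Complex.normSq_apply]; ring
  have h2 : ω.re ≤ ‖ω‖ := Complex.re_le_norm ω
  have h1 : -‖ω‖ ≤ ω.re := by
    have := Complex.abs_re_le_norm ω
    rw [abs_le] at this; exact this.1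
  have := lemRe1 ω.re ‖ω‖ ρ h2 h1 hωρ hρ (norm_nonneg ω)
  rw [hsq] at this
  constructor
  · refine le_trans this.1 (le_of_eq ?_); ring_nf
  · refine le_trans (le_of_eq ?_) this.2; ring_nf

theorem stmt16 (m : ℕ) (hm : 1 ≤ m) (f : ℂ → ℂ)
    (hf : DifferentiableOn ℂ f (ball (0:ℂ) 1))
    (h0 : f 0 = 0) (h1 : deriv f 0 = 1)
    (hvan : ∀ n : ℕ, 2 ≤ n → n ≤ m → iteratedDeriv n f 0 = 0)
    (hnz : ∀ z ∈ ball (0:ℂ) 1, z ≠ 0 → f z ≠ 0)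
    (hre : ∀ z ∈ ball (0:ℂ) 1, z ≠ 0 → 0 < (z * deriv f z / f z).re) :
    ∀ z ∈ ball (0:ℂ) 1,
      ‖z‖ / (1 + ‖z‖ ^ m) ^ ((2:ℝ) / m) ≤ ‖f z‖ ∧
      ‖f z‖ ≤ ‖z‖ / (1 - ‖z‖ ^ m) ^ ((2:ℝ) / m) := by
  obtain ⟨k, rfl⟩ : ∃ k, m = k + 1 := ⟨m - 1, by omega⟩
  intro z hz
  by_cases hz0 : z = 0
  · subst hz0; simp [h0]
  have hball : (0:ℂ) ∈ ball (0:ℂ) 1 := mem_ball_self one_pos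
  have hh : DifferentiableOn ℂ (dslope f 0) (ball 0 1) :=
    (differentiableOn_dslope (ball_mem_nhds _ one_pos)).mpr hf
  set h : ℂ → ℂ := dslope f 0 with hhdef
  have hfzh : ∀ x : ℂ, f x = x * h x := by
    intro x
    have hs := sub_smul_dslope f 0 x
    rw [sub_zero, h0, sub_zero] at hs
    rw [← hs]; simp [smul_eq_mul, hhdef]
  have hh0 : h 0 = 1 := by rw [hhdef, dslope_same]; exact h1
  have hhne : ∀ x ∈ ball (0:ℂ) 1, h x ≠ 0 := by
    intro x hx
    by_cases hx0 : x = 0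
    · subst hx0; rw [hh0]; exact one_ne_zero
    · intro hcon
      exact hnz x hx hx0 (by rw [hfzh x, hcon, mul_zero])
  obtain ⟨p, hp⟩ := hf.analyticOnNhd isOpen_ball 0 hball
  have hφ : ∀ j < k + 1, (swap dslope (0:ℂ))^[j] (fun x => h x - 1) 0 = 0 := by
    intro j hj
    match j with
    | 0 => simp [hh0]
    | (i+1) =>
      rw [iterate_succ_apply]
      have e1 : dslope (fun x => h x - 1) 0 = dslope h 0 := dslope_sub_const h 1
      show (swap dslope (0:ℂ))^[i] (dslope (fun x => h x - 1) 0) 0 = 0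
      rw [e1]
      have e2 : dslope h 0 = (swap dslope (0:ℂ))^[2] f := by
        rw [hhdef]; rfl
      rw [e2, ← Function.iterate_add_apply]
      exact lemC f p hp (i + 2) (hvan (i+2) (by omega) (by omega))
  set g : ℂ → ℂ := (swap dslope (0:ℂ))^[k+1] (fun x => h x - 1) with hgdef
  have hfact : ∀ x : ℂ, h x = 1 + x^(k+1) * g x := by
    intro x
    have := lemB (k+1) (fun x => h x - 1) hφ x
    rw [← hgdef] at this
    linear_combination this
  have hgdiff : DifferentiableOn ℂ g (ball 0 1) :=
    lemBdiff (k+1) _ (hh.sub_const 1)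
  have hgderiv : DifferentiableOn ℂ (deriv g) (ball 0 1) :=
    ((hgdiff.analyticOnNhd isOpen_ball).deriv).differentiableOn
  have hhderiv2 : DifferentiableOn ℂ (deriv h) (ball 0 1) :=
    ((hh.analyticOnNhd isOpen_ball).deriv).differentiableOn
  have hderivh : ∀ x ∈ ball (0:ℂ) 1,
      deriv h x = x^k * (((k:ℂ)+1) * g x + x * deriv g x) := by
    intro x hx
    have hgx : HasDerivAt g (deriv g x) x :=
      (hgdiff.differentiableAt (isOpen_ball.mem_nhds hx)).hasDerivAt
    have hd : HasDerivAt h (((k:ℂ)+1) * x^k * g x + x^(k+1) * deriv g x) x := by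
      have hp1 := ((hasDerivAt_pow (k+1) x).mul hgx).const_add (1:ℂ)
      have : h = fun y : ℂ => 1 + y^(k+1) * g y := funext hfact
      rw [this]
      refine hp1.congr_deriv ?_
      push_cast
      ring
    rw [hd.deriv]; ring
  set P : ℂ → ℂ := fun x => 1 + x * deriv h x / h x with hPdef
  have hPdiff : DifferentiableOn ℂ P (ball 0 1) := by
    apply DifferentiableOn.const_add
    exact (differentiableOn_id.mul hhderiv2).div hh hhne
  have hPval : ∀ x ∈ ball (0:ℂ) 1, x ≠ 0 → P x = x * deriv f x / f x := by
    intro x hx hx0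
    have hdf : deriv f x = h x + x * deriv h x := by
      have hhx : HasDerivAt h (deriv h x) x :=
        (hh.differentiableAt (isOpen_ball.mem_nhds hx)).hasDerivAt
      have hfx : HasDerivAt f (1 * h x + x * deriv h x) x := by
        have : f = fun y : ℂ => y * h y := funext hfzh
        rw [this]
        exact (hasDerivAt_id x).mul hhx
      rw [hfx.deriv]; ring
    rw [hdf, hfzh x, hPdef]
    field_simp [hhne x hx, hx0]
  have hreP : ∀ x ∈ ball (0:ℂ) 1, 0 < (P x).re := by
    intro x hx
    by_cases hx0 : x = 0
    · subst hx0; simp [hPdef]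
    · rw [hPval x hx hx0]; exact hre x hx hx0
  have hP1 : ∀ x ∈ ball (0:ℂ) 1, P x + 1 ≠ 0 := by
    intro x hx hc
    have := congrArg Complex.re hc
    simp only [Complex.add_re, Complex.one_re, Complex.zero_re] at this
    linarith [hreP x hx]
  set w : ℂ → ℂ := fun x => (P x - 1)/(P x + 1) with hwdef
  set B : ℂ → ℂ := fun x => (((k:ℂ)+1) * g x + x * deriv g x) / (h x * (P x + 1)) with hBdef
  have hwm : ∀ x ∈ ball (0:ℂ) 1, w x = x^(k+1) * B x := by
    intro x hx
    have hdh := hderivh x hx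
    have e1 : P x - 1 = x * deriv h x / h x := by rw [hPdef]; ring
    show (P x - 1) / (P x + 1) = x^(k+1) * ((((k:ℂ)+1) * g x + x * deriv g x) / (h x * (P x + 1)))
    rw [e1, hdh]
    field_simp [hhne x hx, hP1 x hx]
    ring
  have hBdiff : DifferentiableOn ℂ B (ball 0 1) := by
    apply DifferentiableOn.div
    · exact (hgdiff.const_smul ((k:ℂ)+1)).congr (fun x _ => by simp [smul_eq_mul]) |>.add
        (differentiableOn_id.mul hgderiv)
    · exact hh.mul (hPdiff.add_const 1)
    · intro x hx
      exact mul_ne_zero (hhne x hx) (hP1 x hx)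
  have hwlt : ∀ x ∈ ball (0:ℂ) 1, ‖w x‖ < 1 := by
    intro x hx
    have hlt : ‖P x - 1‖ < ‖P x + 1‖ := by
      have h2 : Complex.normSq (P x - 1) < Complex.normSq (P x + 1) := by
        simp only [Complex.normSq_apply, Complex.sub_re, Complex.add_re, Complex.sub_im,
          Complex.add_im, Complex.one_re, Complex.one_im]
        nlinarith [hreP x hx]
      have h3 := Real.sqrt_lt_sqrt (Complex.normSq_nonneg _) h2
      rwa [← Complex.norm_def, ← Complex.norm_def] at h3
    show ‖(P x - 1) / (P x + 1)‖ < 1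
    rw [norm_div, div_lt_one (norm_pos_iff.mpr (hP1 x hx))]
    exact hlt
  have hBle := lemA (k+1) w B hBdiff hwm hwlt
  have hwle : ∀ x ∈ ball (0:ℂ) 1, ‖w x‖ ≤ ‖x‖^(k+1) := by
    intro x hx
    rw [hwm x hx, norm_mul, norm_pow]
    calc ‖x‖^(k+1) * ‖B x‖ ≤ ‖x‖^(k+1) * 1 := by
          exact mul_le_mul_of_nonneg_left (hBle x hx) (by positivity)
      _ = ‖x‖^(k+1) := mul_one _
  have hwne1 : ∀ x ∈ ball (0:ℂ) 1, (1:ℂ) - w x ≠ 0 := by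
    intro x hx
    have : (1:ℂ) - w x = 2 / (P x + 1) := by
      show (1:ℂ) - (P x - 1)/(P x + 1) = 2 / (P x + 1)
      field_simp [hP1 x hx]
      ring
    rw [this]
    exact div_ne_zero two_ne_zero (hP1 x hx)
  have hPw : ∀ x ∈ ball (0:ℂ) 1, P x = (1 + w x)/(1 - w x) := by
    intro x hx
    rw [eq_div_iff (hwne1 x hx)]
    show P x * (1 - (P x - 1)/(P x + 1)) = 1 + (P x - 1)/(P x + 1)
    field_simp [hP1 x hx]
    ring
  have hPbound : ∀ x ∈ ball (0:ℂ) 1,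
      (1-‖x‖^(k+1))/(1+‖x‖^(k+1)) ≤ (P x).re ∧ (P x).re ≤ (1+‖x‖^(k+1))/(1-‖x‖^(k+1)) := by
    intro x hx
    have hxlt : ‖x‖ < 1 := by rwa [mem_ball, dist_zero_right] at hx
    have hρ : ‖x‖^(k+1) < 1 := pow_lt_one₀ (norm_nonneg x) hxlt (by omega)
    have := rePbounds (w x) (‖x‖^(k+1)) (hwle x hx) hρ
    rw [← hPw x hx] at this
    exact this
  -- PART 2: integration along the radius
  set R := ‖z‖ with hRdef
  have hR0 : 0 < R := norm_pos_iff.mpr hz0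
  have hR1 : R < 1 := by rwa [mem_ball, dist_zero_right] at hz
  have hnorm : ∀ t : ℝ, 0 ≤ t → ‖(t:ℂ)*z‖ = t * R := by
    intro t ht; rw [norm_mul, Complex.norm_real, Real.norm_eq_abs, _root_.abs_of_nonneg ht]
  have hmem : ∀ t : ℝ, 0 < t → t ≤ 1 → ((t:ℂ)*z) ∈ ball (0:ℂ) 1 := by
    intro t ht0 ht1
    rw [mem_ball, dist_zero_right, hnorm t ht0.le]
    nlinarith
  have hρ : ∀ t : ℝ, 0 < t → t ≤ 1 → (t*R)^(k+1) < 1 := by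
    intro t ht0 ht1
    apply pow_lt_one₀ (by positivity)
    · nlinarith
    · omega
  set L : ℝ → ℝ := fun t => (1/2) * Real.log (Complex.normSq (f ((t:ℂ)*z))) with hLdef
  set U : ℝ → ℝ := fun t =>
    Real.log t + Real.log R - (2/((k:ℝ)+1)) * Real.log (1 - (t*R)^(k+1)) with hUdef
  set V : ℝ → ℝ := fun t =>
    Real.log t + Real.log R - (2/((k:ℝ)+1)) * Real.log (1 + (t*R)^(k+1)) with hVdef
  have hLd : ∀ t : ℝ, 0 < t → t ≤ 1 → HasDerivAt L ((P ((t:ℂ)*z)).re / t) t := by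
    intro t ht0 ht1
    have hxmem := hmem t ht0 ht1
    have hx0 : ((t:ℂ)*z) ≠ 0 := mul_ne_zero (by exact_mod_cast ht0.ne') hz0
    have hdf : DifferentiableAt ℂ f ((t:ℂ)*z) := hf.differentiableAt (isOpen_ball.mem_nhds hxmem)
    have hF := hasDerivAt_comp_real f z t hdf
    have hA := hasDerivAt_normSq_comp _ _ t hF
    have hfne : f ((t:ℂ)*z) ≠ 0 := hnz _ hxmem hx0
    have hnsq : Complex.normSq (f ((t:ℂ)*z)) ≠ 0 := by
      simpa [Complex.normSq_eq_zero] using hfne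
    have hlog := (Real.hasDerivAt_log hnsq).comp t hA
    have hfin := hlog.const_mul (1/2 : ℝ)
    refine hfin.congr_deriv ?_
    symm
    show (P ((t:ℂ)*z)).re / t = 1/2 * ((Complex.normSq (f ((t:ℂ)*z)))⁻¹ *
      (2 * ((starRingEnd ℂ) (f ((t:ℂ)*z)) * (z * deriv f ((t:ℂ)*z))).re))
    have e1 : (1:ℝ)/2 * ((Complex.normSq (f ((t:ℂ)*z)))⁻¹ *
        (2 * ((starRingEnd ℂ) (f ((t:ℂ)*z)) * (z * deriv f ((t:ℂ)*z))).re))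
        = ((z * deriv f ((t:ℂ)*z)) / f ((t:ℂ)*z)).re := by
      rw [Complex.div_re, Complex.mul_re, Complex.conj_re, Complex.conj_im]
      field_simp
      ring
    rw [e1, hPval _ hxmem hx0]
    have e2 : ((t:ℂ)*z) * deriv f ((t:ℂ)*z) / f ((t:ℂ)*z) / (t:ℂ)
        = z * deriv f ((t:ℂ)*z) / f ((t:ℂ)*z) := by
      have ht0' : (t:ℂ) ≠ 0 := by exact_mod_cast ht0.ne'
      field_simp
    rw [← e2, Complex.div_ofReal_re]
  have hUd : ∀ t : ℝ, 0 < t → t ≤ 1 →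
      HasDerivAt U ((1+(t*R)^(k+1))/(t*(1-(t*R)^(k+1)))) t := by
    intro t ht0 ht1
    have h1m : 0 < 1 - (t*R)^(k+1) := by linarith [hρ t ht0 ht1]
    have hinner : HasDerivAt (fun s : ℝ => 1 - (s*R)^(k+1))
        (-((((k:ℝ)+1) * (t*R)^k * R))) t := by
      have := (((hasDerivAt_id t).mul_const R).pow (k+1)).const_sub 1
      refine this.congr_deriv ?_
      push_cast
      simp
    have hlog2 := (Real.hasDerivAt_log h1m.ne').comp t hinner
    have hd := ((Real.hasDerivAt_log ht0.ne').add_const (Real.log R)).sub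
      (hlog2.const_mul (2/((k:ℝ)+1)))
    refine hd.congr_deriv ?_
    rw [pow_succ]
    have hk1 : ((k:ℝ)+1) ≠ 0 := by positivity
    rw [pow_succ] at h1m
    have h1m' : (1:ℝ) - t * t ^ k * R * R ^ k ≠ 0 := by
      intro hc; apply h1m.ne'; linear_combination hc
    field_simp [ht0.ne', h1m.ne', h1m']
    have hX : (1 - t*t^k*R*R^k) * (1 - t*t^k*R*R^k)⁻¹ = 1 := mul_inv_cancel₀ h1m'
    linear_combination -hX
  have hVd : ∀ t : ℝ, 0 < t → t ≤ 1 →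
      HasDerivAt V ((1-(t*R)^(k+1))/(t*(1+(t*R)^(k+1)))) t := by
    intro t ht0 ht1
    have h1p : 0 < 1 + (t*R)^(k+1) := by positivity
    have hinner : HasDerivAt (fun s : ℝ => 1 + (s*R)^(k+1))
        ((((k:ℝ)+1) * (t*R)^k * R)) t := by
      have := (((hasDerivAt_id t).mul_const R).pow (k+1)).const_add 1
      refine this.congr_deriv ?_
      push_cast
      simp
    have hlog2 := (Real.hasDerivAt_log h1p.ne').comp t hinner
    have hd := ((Real.hasDerivAt_log ht0.ne').add_const (Real.log R)).sub
      (hlog2.const_mul (2/((k:ℝ)+1)))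
    refine hd.congr_deriv ?_
    rw [pow_succ]
    have hk1 : ((k:ℝ)+1) ≠ 0 := by positivity
    rw [pow_succ] at h1p
    field_simp [ht0.ne', h1p.ne']
    ring
  -- comparison of derivatives
  have hcmp : ∀ t : ℝ, 0 < t → t ≤ 1 →
      (1-(t*R)^(k+1))/(t*(1+(t*R)^(k+1))) ≤ (P ((t:ℂ)*z)).re / t ∧
      (P ((t:ℂ)*z)).re / t ≤ (1+(t*R)^(k+1))/(t*(1-(t*R)^(k+1))) := by
    intro t ht0 ht1
    have hb := hPbound ((t:ℂ)*z) (hmem t ht0 ht1)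
    rw [hnorm t ht0.le] at hb
    have h1m : 0 < 1 - (t*R)^(k+1) := by linarith [hρ t ht0 ht1]
    have h1p : (0:ℝ) < 1 + (t*R)^(k+1) := by positivity
    constructor
    · rw [div_le_div_iff₀ (by positivity) ht0]
      have := hb.1
      rw [div_le_iff₀ h1p] at this
      nlinarith
    · rw [div_le_div_iff₀ ht0 (by positivity)]
      have := hb.2
      rw [le_div_iff₀ h1m] at this
      nlinarith
  -- monotone comparison
  have key1 : ∀ ε : ℝ, 0 < ε → ε ≤ 1 → L 1 - L ε ≤ U 1 - U ε := by
    intro ε hε0 hε1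
    have hmono : MonotoneOn (fun t => U t - L t) (Icc ε 1) := by
      apply monotoneOn_of_deriv_nonneg (convex_Icc ε 1)
      · intro t ht
        have ht' : 0 < t ∧ t ≤ 1 := ⟨lt_of_lt_of_le hε0 ht.1, ht.2⟩
        exact (((hUd t ht'.1 ht'.2).sub (hLd t ht'.1 ht'.2)).continuousAt).continuousWithinAt
      · intro t ht
        rw [interior_Icc] at ht
        have ht' : 0 < t ∧ t ≤ 1 := ⟨lt_of_lt_of_le hε0 ht.1.le, ht.2.le⟩
        exact ((hUd t ht'.1 ht'.2).sub (hLd t ht'.1 ht'.2)).differentiableAt.differentiableWithinAt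
      · intro t ht
        rw [interior_Icc] at ht
        have ht' : 0 < t ∧ t ≤ 1 := ⟨lt_of_lt_of_le hε0 ht.1.le, ht.2.le⟩
        rw [HasDerivAt.deriv (f := fun t => U t - L t) ((hUd t ht'.1 ht'.2).sub (hLd t ht'.1 ht'.2))]
        linarith [(hcmp t ht'.1 ht'.2).2]
    have := hmono (left_mem_Icc.mpr hε1) (right_mem_Icc.mpr hε1) hε1
    simp only at this
    linarith
  have key2 : ∀ ε : ℝ, 0 < ε → ε ≤ 1 → L 1 - L ε ≥ V 1 - V ε := by
    intro ε hε0 hε1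
    have hmono : MonotoneOn (fun t => L t - V t) (Icc ε 1) := by
      apply monotoneOn_of_deriv_nonneg (convex_Icc ε 1)
      · intro t ht
        have ht' : 0 < t ∧ t ≤ 1 := ⟨lt_of_lt_of_le hε0 ht.1, ht.2⟩
        exact (((hLd t ht'.1 ht'.2).sub (hVd t ht'.1 ht'.2)).continuousAt).continuousWithinAt
      · intro t ht
        rw [interior_Icc] at ht
        have ht' : 0 < t ∧ t ≤ 1 := ⟨lt_of_lt_of_le hε0 ht.1.le, ht.2.le⟩
        exact ((hLd t ht'.1 ht'.2).sub (hVd t ht'.1 ht'.2)).differentiableAt.differentiableWithinAt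
      · intro t ht
        rw [interior_Icc] at ht
        have ht' : 0 < t ∧ t ≤ 1 := ⟨lt_of_lt_of_le hε0 ht.1.le, ht.2.le⟩
        rw [HasDerivAt.deriv (f := fun t => L t - V t) ((hLd t ht'.1 ht'.2).sub (hVd t ht'.1 ht'.2))]
        linarith [(hcmp t ht'.1 ht'.2).1]
    have := hmono (left_mem_Icc.mpr hε1) (right_mem_Icc.mpr hε1) hε1
    simp only at this
    linarith
  -- limits as eps -> 0+
  have hcont_h : ContinuousAt h 0 :=
    (hh.differentiableAt (isOpen_ball.mem_nhds hball)).continuousAt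
  have hLval : ∀ ε : ℝ, 0 < ε → ε ≤ 1 →
      L ε = Real.log ε + Real.log R + (1/2)*Real.log (Complex.normSq (h ((ε:ℂ)*z))) := by
    intro ε hε0 hε1
    have hmem' := hmem ε hε0 hε1
    have hhne' : h ((ε:ℂ)*z) ≠ 0 := hhne _ hmem'
    have hnsqne : Complex.normSq (h ((ε:ℂ)*z)) ≠ 0 := by
      simpa [Complex.normSq_eq_zero] using hhne'
    have e1 : Complex.normSq (f ((ε:ℂ)*z))
        = (ε*R)^2 * Complex.normSq (h ((ε:ℂ)*z)) := by
      rw [hfzh ((ε:ℂ)*z), Complex.normSq_mul, Complex.normSq_eq_norm_sq,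
        hnorm ε hε0.le]
    rw [hLdef]
    simp only
    rw [e1, Real.log_mul (by positivity) hnsqne, Real.log_pow,
      Real.log_mul hε0.ne' hR0.ne']
    push_cast
    ring
  have c2 : Filter.Tendsto (fun ε : ℝ => Complex.normSq (h ((ε:ℂ)*z))) (nhds 0) (nhds 1) := by
    have t1 : Filter.Tendsto (fun ε : ℝ => ((ε:ℂ)*z)) (nhds (0:ℝ)) (nhds (0:ℂ)) := by
      have hc : Continuous (fun ε : ℝ => ((ε:ℂ)*z)) := by fun_prop
      simpa using hc.tendsto (0:ℝ)
    have t2 : Filter.Tendsto h (nhds (0:ℂ)) (nhds (1:ℂ)) := by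
      rw [← hh0]; exact hcont_h
    have t3 : Filter.Tendsto Complex.normSq (nhds (1:ℂ)) (nhds (1:ℝ)) := by
      simpa using Complex.continuous_normSq.tendsto (1:ℂ)
    exact t3.comp (t2.comp t1)
  have c3 : Filter.Tendsto (fun ε : ℝ => (1/2)*Real.log (Complex.normSq (h ((ε:ℂ)*z))))
      (nhds 0) (nhds 0) := by
    have t4 : Filter.Tendsto Real.log (nhds 1) (nhds 0) := by
      simpa using (Real.continuousAt_log one_ne_zero).tendsto
    have := (t4.comp c2).const_mul (1/2 : ℝ)
    simpa using this
  have c4 : Filter.Tendsto (fun ε : ℝ => (2/((k:ℝ)+1)) * Real.log (1 - (ε*R)^(k+1)))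
      (nhds 0) (nhds 0) := by
    have hc : ContinuousAt (fun ε : ℝ => (2/((k:ℝ)+1)) * Real.log (1 - (ε*R)^(k+1))) 0 := by
      apply ContinuousAt.mul continuousAt_const
      have hinner : ContinuousAt (fun ε : ℝ => 1 - (ε*R)^(k+1)) 0 := by fun_prop
      exact hinner.log (by norm_num)
    have hv := hc.tendsto
    norm_num at hv
    exact hv
  have c5 : Filter.Tendsto (fun ε : ℝ => (2/((k:ℝ)+1)) * Real.log (1 + (ε*R)^(k+1)))
      (nhds 0) (nhds 0) := by
    have hc : ContinuousAt (fun ε : ℝ => (2/((k:ℝ)+1)) * Real.log (1 + (ε*R)^(k+1))) 0 := by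
      apply ContinuousAt.mul continuousAt_const
      have hinner : ContinuousAt (fun ε : ℝ => 1 + (ε*R)^(k+1)) 0 := by fun_prop
      exact hinner.log (by norm_num)
    have hv := hc.tendsto
    norm_num at hv
    exact hv
  -- L 1 ≤ U 1
  have hfinal1 : L 1 ≤ U 1 := by
    have hev : ∀ᶠ ε : ℝ in nhdsWithin (0:ℝ) (Set.Ioi 0), L 1 - U 1 ≤
        (1/2)*Real.log (Complex.normSq (h ((ε:ℂ)*z)))
        + (2/((k:ℝ)+1)) * Real.log (1 - (ε*R)^(k+1)) := by
      filter_upwards [Ioo_mem_nhdsGT_of_mem (⟨le_rfl, one_pos⟩ : (0:ℝ) ∈ Ico 0 1)] with ε hε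
      have hk := key1 ε hε.1 hε.2.le
      have hLe := hLval ε hε.1 hε.2.le
      rw [hLe] at hk
      rw [hUdef] at hk
      simp only at hk
      have hU1e : U 1 = Real.log 1 + Real.log R
          - 2/((k:ℝ)+1) * Real.log (1 - (1*R)^(k+1)) := by rw [hUdef]
      rw [hU1e]
      linarith
    have hlim : Filter.Tendsto (fun ε : ℝ => (1/2)*Real.log (Complex.normSq (h ((ε:ℂ)*z)))
        + (2/((k:ℝ)+1)) * Real.log (1 - (ε*R)^(k+1))) (nhdsWithin (0:ℝ) (Set.Ioi 0)) (nhds 0) := by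
      have := (c3.add c4).mono_left (nhdsWithin_le_nhds (s := Set.Ioi (0:ℝ)))
      simpa using this
    have := ge_of_tendsto hlim hev
    linarith
  -- V 1 ≤ L 1
  have hfinal2 : V 1 ≤ L 1 := by
    have hev : ∀ᶠ ε : ℝ in nhdsWithin (0:ℝ) (Set.Ioi 0), V 1 - L 1 ≤
        - ((2/((k:ℝ)+1)) * Real.log (1 + (ε*R)^(k+1)))
        - (1/2)*Real.log (Complex.normSq (h ((ε:ℂ)*z))) := by
      filter_upwards [Ioo_mem_nhdsGT_of_mem (⟨le_rfl, one_pos⟩ : (0:ℝ) ∈ Ico 0 1)] with ε hε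
      have hk := key2 ε hε.1 hε.2.le
      have hLe := hLval ε hε.1 hε.2.le
      rw [hLe] at hk
      rw [hVdef] at hk
      simp only at hk
      have hV1e : V 1 = Real.log 1 + Real.log R
          - 2/((k:ℝ)+1) * Real.log (1 + (1*R)^(k+1)) := by rw [hVdef]
      rw [hV1e]
      linarith
    have hlim : Filter.Tendsto (fun ε : ℝ => - ((2/((k:ℝ)+1)) * Real.log (1 + (ε*R)^(k+1)))
        - (1/2)*Real.log (Complex.normSq (h ((ε:ℂ)*z)))) (nhdsWithin (0:ℝ) (Set.Ioi 0)) (nhds 0) := by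
      have := (c5.neg.sub c3).mono_left (nhdsWithin_le_nhds (s := Set.Ioi (0:ℝ)))
      simpa using this
    have := ge_of_tendsto hlim hev
    linarith
  -- conversion to the stated inequalities
  have hfz : f z ≠ 0 := hnz z hz hz0
  have hfzpos : 0 < ‖f z‖ := norm_pos_iff.mpr hfz
  have hone : (((1:ℝ):ℂ)*z) = z := by simp
  have hL1 : L 1 = Real.log ‖f z‖ := by
    rw [hLdef]
    simp only [hone]
    rw [Complex.normSq_eq_norm_sq, Real.log_pow]
    push_cast
    ring
  have h1mR : 0 < 1 - R^(k+1) := by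
    have := hρ 1 one_pos le_rfl
    rw [one_mul] at this
    linarith
  have h1pR : (0:ℝ) < 1 + R^(k+1) := by positivity
  have hU1 : U 1 = Real.log (R / (1-R^(k+1))^((2:ℝ)/((k:ℝ)+1))) := by
    rw [hUdef]
    simp only [one_mul, Real.log_one]
    rw [Real.log_div hR0.ne' (by positivity), Real.log_rpow h1mR]
    ring
  have hV1 : V 1 = Real.log (R / (1+R^(k+1))^((2:ℝ)/((k:ℝ)+1))) := by
    rw [hVdef]
    simp only [one_mul, Real.log_one]
    rw [Real.log_div hR0.ne' (by positivity), Real.log_rpow h1pR]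
    ring
  have hcast : ((k+1:ℕ):ℝ) = (k:ℝ)+1 := by push_cast; ring
  constructor
  · -- lower bound
    rw [hV1, hL1] at hfinal2
    have := (Real.log_le_log_iff (by positivity) hfzpos).mp hfinal2
    calc ‖z‖ / (1 + ‖z‖ ^ (k+1)) ^ ((2:ℝ) / ((k+1:ℕ):ℝ))
        = R / (1+R^(k+1))^((2:ℝ)/((k:ℝ)+1)) := by rw [hcast]
      _ ≤ ‖f z‖ := this
  · -- upper bound
    rw [hU1, hL1] at hfinal1
    have := (Real.log_le_log_iff hfzpos (by positivity)).mp hfinal1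
    calc ‖f z‖ ≤ R / (1-R^(k+1))^((2:ℝ)/((k:ℝ)+1)) := this
      _ = ‖z‖ / (1 - ‖z‖ ^ (k+1)) ^ ((2:ℝ) / ((k+1:ℕ):ℝ)) := by rw [hcast]
end

section
/- Let f be a starlike function on the unit disk and let M(r) = sup_{|z|=r} |f(z)|. Then the function φ(r) = (1−r)² M(r)/r is monotonically decreasing on (0,1), and hence tends to a limit α ∈ [0,1] as r → 1⁻. -/
open Complex Metric Set

lemma harnack_aux {g : ℂ → ℂ} (hg : DifferentiableOn ℂ g (ball 0 1)) (hg0 : g 0 = 1)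
    (hpos : ∀ z ∈ ball (0:ℂ) 1, 0 < (g z).re) {z : ℂ} (hz : z ∈ ball (0:ℂ) 1) :
    (g z).re * (1 - ‖z‖) ≤ 1 + ‖z‖ := by
  set w : ℂ → ℂ := fun ζ => (g ζ - 1) / (g ζ + 1) with hw
  have hden : ∀ ζ ∈ ball (0:ℂ) 1, g ζ + 1 ≠ 0 := by
    intro ζ hζ hc
    have : (g ζ + 1).re = 0 := by rw [hc]; simp
    simp only [add_re, one_re] at this
    linarith [hpos ζ hζ]
  have hwd : DifferentiableOn ℂ w (ball 0 1) :=
    ((hg.sub (differentiableOn_const 1)).div (hg.add (differentiableOn_const 1)) hden)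
  have hmaps : MapsTo w (ball (0:ℂ) 1) (ball (0:ℂ) 1) := by
    intro ζ hζ
    rw [mem_ball_zero_iff]
    have h1 : ‖g ζ - 1‖ < ‖g ζ + 1‖ := by
      have e1 : ‖g ζ - 1‖ = Real.sqrt (Complex.normSq (g ζ - 1)) := by
        rw [Complex.norm_def]
      have e2 : ‖g ζ + 1‖ = Real.sqrt (Complex.normSq (g ζ + 1)) := by
        rw [Complex.norm_def]
      rw [e1, e2]
      apply Real.sqrt_lt_sqrt (Complex.normSq_nonneg _)
      simp only [Complex.normSq_apply, sub_re, sub_im, add_re, add_im, one_re, one_im]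
      nlinarith [hpos ζ hζ]
    calc ‖w ζ‖ = ‖g ζ - 1‖ / ‖g ζ + 1‖ := by
          simp [hw, map_div₀]
      _ < 1 := (div_lt_one (lt_of_le_of_lt (norm_nonneg _) h1)).2 h1
  have hw0 : w 0 = 0 := by simp [hw, hg0]
  have hsch := Complex.norm_le_norm_of_mapsTo_ball_self hwd (hmaps.mono_right ball_subset_closedBall) hw0 (mem_ball_zero_iff.1 hz)
  -- abs (w z) ≤ abs z
  have hzden := hden z hz
  have h2 : ‖g z - 1‖ ≤ ‖z‖ * ‖g z + 1‖ := by
    have : ‖w z‖ = ‖g z - 1‖ / ‖g z + 1‖ := by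
      simp [hw, map_div₀]
    rw [this] at hsch
    rwa [div_le_iff₀ (norm_pos_iff.2 hzden)] at hsch
  have h3 : Complex.normSq (g z - 1) ≤ (‖z‖)^2 * Complex.normSq (g z + 1) := by
    have := mul_self_le_mul_self (norm_nonneg _) h2
    rw [← Complex.sq_norm, ← Complex.sq_norm]
    nlinarith [Complex.sq_norm (g z - 1), Complex.sq_norm (g z + 1)]
  simp only [Complex.normSq_apply, sub_re, sub_im, add_re, add_im, one_re, one_im] at h3
  set x := (g z).re with hxd; set y := (g z).im with hyd; set r := ‖z‖ with hrd
  have hx : 0 < x := hpos z hz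
  have hr0 : 0 ≤ r := norm_nonneg z
  have hr1 : r < 1 := mem_ball_zero_iff.1 hz
  by_contra hcon
  push_neg at hcon
  have hA : 0 < x*(1-r) - (1+r) := by linarith
  have hB : 0 < x*(1+r) - (1-r) := by nlinarith [mul_nonneg hx.le hr0]
  nlinarith [mul_pos hA hB, sq_nonneg y, sq_nonneg (r*y)]

lemma hasDerivAt_log_norm {F : ℝ → ℂ} {F' : ℂ} {t : ℝ} (hF : HasDerivAt F F' t) (h0 : F t ≠ 0) :
    HasDerivAt (fun s => Real.log ‖F s‖) ((F' / F t).re) t := by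
  set c := F t with hc
  have hG : HasDerivAt (fun s => F s / c) (F' / c) t := hF.div_const c
  have hG1 : F t / c = 1 := div_self h0
  have hlog : HasDerivAt (fun s => Complex.log (F s / c)) (F' / c / (F t / c)) t :=
    hG.clog_real (by rw [hG1]; exact Complex.one_mem_slitPlane)
  rw [hG1, div_one] at hlog
  have hre : HasDerivAt (fun s => (Complex.log (F s / c)).re) ((F' / c).re) t :=
    Complex.reCLM.hasFDerivAt.comp_hasDerivAt t hlog
  have hev : (fun s => (Complex.log (F s / c)).re + Real.log ‖c‖) =ᶠ[nhds t]
      (fun s => Real.log ‖F s‖) := by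
    have hne : ∀ᶠ s in nhds t, F s ≠ 0 :=
      hF.continuousAt.eventually_ne h0
    filter_upwards [hne] with s hs
    rw [Complex.log_re, norm_div]
    rw [Real.log_div (norm_ne_zero_iff.2 hs) (norm_ne_zero_iff.2 h0)]
    simp
  have := (hre.add_const (Real.log ‖c‖)).congr_of_eventuallyEq hev.symm
  convert this using 1

lemma keyIneq (f : ℂ → ℂ)
    (hf : DifferentiableOn ℂ f (ball (0:ℂ) 1))
    (h0 : f 0 = 0) (h1 : deriv f 0 = 1)
    (hnz : ∀ z ∈ ball (0:ℂ) 1, z ≠ 0 → f z ≠ 0)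
    (hre : ∀ z ∈ ball (0:ℂ) 1, z ≠ 0 → 0 < (z * deriv f z / f z).re)
    {u : ℂ} (hu : ‖u‖ = 1) {r₁ r₂ : ℝ} (h01 : 0 < r₁) (h12 : r₁ ≤ r₂) (h21 : r₂ < 1) :
    ‖f (r₂ • u)‖ * ((1 - r₂)^2 / r₂) ≤ ‖f (r₁ • u)‖ * ((1 - r₁)^2 / r₁) := by
  have hu0 : u ≠ 0 := by intro h; rw [h] at hu; simp at hu
  -- the function h = f z / z
  set h : ℂ → ℂ := dslope f 0 with hh_def
  have hh : DifferentiableOn ℂ h (ball 0 1) :=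
    (Complex.differentiableOn_dslope (ball_mem_nhds _ one_pos)).2 hf
  have hfzh : ∀ z : ℂ, f z = z * h z := by
    intro z
    have := sub_smul_dslope f 0 z
    rw [h0, sub_zero, sub_zero, smul_eq_mul] at this
    exact this.symm
  have hh0 : h 0 = 1 := by rw [hh_def, dslope_same, h1]
  have hhnz : ∀ z ∈ ball (0:ℂ) 1, h z ≠ 0 := by
    intro z hz
    rcases eq_or_ne z 0 with rfl | hz0
    · rw [hh0]; exact one_ne_zero
    · intro hc
      exact hnz z hz hz0 (by rw [hfzh z, hc, mul_zero])
  have han : AnalyticOnNhd ℂ h (ball 0 1) := hh.analyticOnNhd isOpen_ball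
  have hdh : DifferentiableOn ℂ (deriv h) (ball 0 1) := han.deriv.differentiableOn
  -- g z = (h z + z * deriv h z) / h z
  set g : ℂ → ℂ := fun z => (h z + z * deriv h z) / h z with hg_def
  have hgdiff : DifferentiableOn ℂ g (ball 0 1) :=
    (hh.add (differentiableOn_id.mul hdh)).div hh hhnz
  have hg0 : g 0 = 1 := by simp [hg_def, hh0]
  have hderivf : ∀ z ∈ ball (0:ℂ) 1, deriv f z = h z + z * deriv h z := by
    intro z hz
    have hhd : HasDerivAt h (deriv h z) z :=
      ((hh z hz).differentiableAt (isOpen_ball.mem_nhds hz)).hasDerivAt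
    have : HasDerivAt (fun w => w * h w) (1 * h z + z * deriv h z) z :=
      (hasDerivAt_id z).mul hhd
    have hfd : HasDerivAt f (1 * h z + z * deriv h z) z := by
      apply this.congr_of_eventuallyEq
      filter_upwards with w using (hfzh w)
    rw [hfd.deriv]; ring
  have hg_eq : ∀ z ∈ ball (0:ℂ) 1, z ≠ 0 → g z = z * deriv f z / f z := by
    intro z hz hz0
    rw [hderivf z hz, hfzh z, hg_def]
    field_simp [hhnz z hz]
  have hgpos : ∀ z ∈ ball (0:ℂ) 1, 0 < (g z).re := by
    intro z hz
    rcases eq_or_ne z 0 with rfl | hz0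
    · rw [hg0]; norm_num
    · rw [hg_eq z hz hz0]; exact hre z hz hz0
  -- the comparison function on (0,1)
  set L : ℝ → ℝ := fun t => Real.log ‖f ((t:ℝ) • u)‖ - (Real.log t - 2 * Real.log (1 - t))
    with hL_def
  have hmem : ∀ t : ℝ, t ∈ Ioo (0:ℝ) 1 → (t:ℝ) • u ∈ ball (0:ℂ) 1 := by
    intro t ht
    rw [mem_ball_zero_iff, norm_smul, hu, mul_one, Real.norm_eq_abs,
      abs_of_pos ht.1]
    exact ht.2
  have hL' : ∀ t ∈ Ioo (0:ℝ) 1, HasDerivAt L ((g ((t:ℝ) • u)).re / t - (1/t + 2/(1-t))) t := by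
    intro t ht
    have htu : (t:ℝ) • u ∈ ball (0:ℂ) 1 := hmem t ht
    have htu0 : (t:ℝ) • u ≠ 0 := smul_ne_zero (ne_of_gt ht.1) hu0
    have hfne : f ((t:ℝ) • u) ≠ 0 := hnz _ htu htu0
    -- derivative of t ↦ f (t • u)
    have hin : HasDerivAt (fun s : ℝ => (s:ℝ) • u) ((1:ℝ) • u) t :=
      (hasDerivAt_id t).smul_const u
    have hout : HasDerivAt f (deriv f ((t:ℝ) • u)) ((t:ℝ) • u) :=
      ((hf _ htu).differentiableAt (isOpen_ball.mem_nhds htu)).hasDerivAt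
    have hF : HasDerivAt (fun s : ℝ => f ((s:ℝ) • u)) (((1:ℝ) • u) • deriv f ((t:ℝ) • u)) t :=
      hout.scomp t hin
    have hlog1 : HasDerivAt (fun s : ℝ => Real.log ‖f ((s:ℝ) • u)‖)
        (((((1:ℝ) • u) • deriv f ((t:ℝ) • u)) / f ((t:ℝ) • u)).re) t :=
      hasDerivAt_log_norm hF hfne
    have heq : (((((1:ℝ) • u) • deriv f ((t:ℝ) • u)) / f ((t:ℝ) • u)).re) =
        (g ((t:ℝ) • u)).re / t := by
      rw [hg_eq _ htu htu0]
      have ht0 : (t:ℂ) ≠ 0 := by exact_mod_cast ne_of_gt ht.1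
      have : ((t:ℝ) • u * deriv f ((t:ℝ) • u) / f ((t:ℝ) • u)) / (t:ℂ) =
          (((1:ℝ) • u) • deriv f ((t:ℝ) • u)) / f ((t:ℝ) • u) := by
        simp only [one_smul, smul_eq_mul, Complex.real_smul]
        rw [div_div, mul_comm (f (↑t * u)) (↑t : ℂ), mul_assoc,
          mul_div_mul_left _ _ ht0]
      rw [← this, Complex.div_ofReal_re]
    rw [heq] at hlog1
    have hlog2 : HasDerivAt (fun s : ℝ => Real.log s - 2 * Real.log (1 - s))
        (1/t + 2/(1-t)) t := by
      have d1 : HasDerivAt Real.log t⁻¹ t := Real.hasDerivAt_log (ne_of_gt ht.1)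
      have din : HasDerivAt (fun s : ℝ => 1 - s) (-1) t := by
        simpa using (hasDerivAt_id t).const_sub 1
      have d2 : HasDerivAt (fun s : ℝ => Real.log (1 - s)) ((1-t)⁻¹ * (-1)) t :=
        (Real.hasDerivAt_log (ne_of_gt (by linarith [ht.2] : (0:ℝ) < 1 - t))).comp t din
      have := d1.sub ((d2.const_mul 2))
      exact this.congr_deriv (by ring)
    exact hlog1.sub hlog2
  have hIcc : Icc r₁ r₂ ⊆ Ioo (0:ℝ) 1 := fun t ht =>
    ⟨lt_of_lt_of_le h01 ht.1, lt_of_le_of_lt ht.2 h21⟩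
  have hL'le : ∀ t ∈ Ioo (0:ℝ) 1, (g ((t:ℝ) • u)).re / t - (1/t + 2/(1-t)) ≤ 0 := by
    intro t ht
    have htu := hmem t ht
    have habs : ‖(t:ℝ) • u‖ = t := by
      rw [norm_smul, hu, mul_one, Real.norm_eq_abs, abs_of_pos ht.1]
    have hhar := harnack_aux hgdiff hg0 hgpos htu
    rw [habs] at hhar
    have ht1 : (0:ℝ) < 1 - t := by linarith [ht.2]
    have e1 : (1:ℝ)/t + 2/(1-t) = (1+t)/(t*(1-t)) := by
      rw [div_add_div _ _ ht.1.ne' ht1.ne']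
      ring_nf
    have e2 : (g ((t:ℝ) • u)).re / t ≤ (1+t)/(t*(1-t)) := by
      rw [div_le_div_iff₀ ht.1 (mul_pos ht.1 ht1)]
      nlinarith [mul_le_mul_of_nonneg_right hhar ht.1.le]
    linarith [e2, e1.symm.le]
  have hanti : AntitoneOn L (Icc r₁ r₂) := by
    have hc : ContinuousOn L (Icc r₁ r₂) := fun t ht =>
      ((hL' t (hIcc ht)).continuousAt).continuousWithinAt
    apply antitoneOn_of_deriv_nonpos (convex_Icc r₁ r₂) hc
    · intro t ht
      rw [interior_Icc] at ht
      exact ((hL' t (hIcc (Ioo_subset_Icc_self ht))).differentiableAt).differentiableWithinAt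
    · intro t ht
      rw [interior_Icc] at ht
      rw [(hL' t (hIcc (Ioo_subset_Icc_self ht))).deriv]
      exact hL'le t (hIcc (Ioo_subset_Icc_self ht))
  have hLlog : ∀ t ∈ Ioo (0:ℝ) 1, L t = Real.log (‖f ((t:ℝ) • u)‖ * ((1-t)^2 / t)) := by
    intro t ht
    have hfne : f ((t:ℝ) • u) ≠ 0 := hnz _ (hmem t ht) (smul_ne_zero (ne_of_gt ht.1) hu0)
    have h1t : (0:ℝ) < 1 - t := by linarith [ht.2]
    rw [Real.log_mul (norm_ne_zero_iff.2 hfne) (ne_of_gt (div_pos (by positivity) ht.1)),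
      Real.log_div (pow_ne_zero 2 h1t.ne') (ne_of_gt ht.1), Real.log_pow]
    simp only [hL_def]
    push_cast
    ring
  have m1 : r₁ ∈ Ioo (0:ℝ) 1 := ⟨h01, lt_of_le_of_lt h12 h21⟩
  have m2 : r₂ ∈ Ioo (0:ℝ) 1 := ⟨lt_of_lt_of_le h01 h12, h21⟩
  have hL21 : L r₂ ≤ L r₁ := hanti ⟨le_refl r₁, h12⟩ ⟨h12, le_refl r₂⟩ h12
  rw [hLlog r₂ m2, hLlog r₁ m1] at hL21
  have p2 : 0 < ‖f ((r₂:ℝ) • u)‖ * ((1-r₂)^2 / r₂) := by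
    have hfne : f ((r₂:ℝ) • u) ≠ 0 := hnz _ (hmem _ m2) (smul_ne_zero (ne_of_gt m2.1) hu0)
    have h1t : (0:ℝ) < 1 - r₂ := by linarith [m2.2]
    exact mul_pos (norm_pos_iff.2 hfne) (div_pos (by positivity) m2.1)
  have p1 : 0 < ‖f ((r₁:ℝ) • u)‖ * ((1-r₁)^2 / r₁) := by
    have hfne : f ((r₁:ℝ) • u) ≠ 0 := hnz _ (hmem _ m1) (smul_ne_zero (ne_of_gt m1.1) hu0)
    have h1t : (0:ℝ) < 1 - r₁ := by linarith [m1.2]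
    exact mul_pos (norm_pos_iff.2 hfne) (div_pos (by positivity) m1.1)
  exact (Real.log_le_log_iff p2 p1).1 hL21

theorem stmt17 (f : ℂ → ℂ)
    (hf : DifferentiableOn ℂ f (ball (0:ℂ) 1))
    (h0 : f 0 = 0) (h1 : deriv f 0 = 1)
    (hnz : ∀ z ∈ ball (0:ℂ) 1, z ≠ 0 → f z ≠ 0)
    (hre : ∀ z ∈ ball (0:ℂ) 1, z ≠ 0 → 0 < (z * deriv f z / f z).re)
    (M : ℝ → ℝ) (hM : ∀ r, M r = sSup ((fun z => ‖f z‖) '' sphere (0:ℂ) r))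
    (φ : ℝ → ℝ) (hφ : ∀ r, φ r = (1 - r) ^ 2 * M r / r) :
    AntitoneOn φ (Set.Ioo (0:ℝ) 1) ∧
    ∃ α ∈ Set.Icc (0:ℝ) 1,
      Filter.Tendsto φ (nhdsWithin 1 (Set.Iio 1)) (nhds α) := by

  have hball : ∀ r : ℝ, r < 1 → sphere (0:ℂ) r ⊆ ball (0:ℂ) 1 := by
    intro r hr z hz
    rw [mem_sphere_zero_iff_norm] at hz
    rw [mem_ball_zero_iff, hz]; exact hr
  have hbdd : ∀ r : ℝ, r < 1 → BddAbove ((fun z => ‖f z‖) '' sphere (0:ℂ) r) := by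
    intro r hr1
    exact (isCompact_sphere 0 r).bddAbove_image
      ((hf.continuousOn.mono (hball r hr1)).norm)
  have hMge : ∀ r ∈ Ioo (0:ℝ) 1, ∀ z ∈ sphere (0:ℂ) r, ‖f z‖ ≤ M r := by
    intro r hr z hz
    rw [hM]
    exact le_csSup (hbdd r hr.2) ⟨z, hz, rfl⟩
  have hM0 : ∀ r ∈ Ioo (0:ℝ) 1, 0 ≤ M r := by
    intro r hr
    have hmem : (r:ℂ) ∈ sphere (0:ℂ) r := by
      rw [mem_sphere_zero_iff_norm, Complex.norm_real, Real.norm_eq_abs, abs_of_pos hr.1]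
    exact le_trans (norm_nonneg _) (hMge r hr _ hmem)
  have hkey : ∀ r₁ ∈ Ioo (0:ℝ) 1, ∀ r₂ ∈ Ioo (0:ℝ) 1, r₁ ≤ r₂ → φ r₂ ≤ φ r₁ := by
    intro r₁ hr1 r₂ hr2 h12
    have h1r2 : (0:ℝ) < 1 - r₂ := by linarith [hr2.2]
    have h1r1 : (0:ℝ) < 1 - r₁ := by linarith [hr1.2]
    have hc : (0:ℝ) < (1-r₂)^2/r₂ := div_pos (by positivity) hr2.1
    have hc1 : (0:ℝ) < (1-r₁)^2/r₁ := div_pos (by positivity) hr1.1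
    have hC : M r₂ * ((1-r₂)^2/r₂) ≤ M r₁ * ((1-r₁)^2/r₁) := by
      have hsup : sSup ((fun z => ‖f z‖) '' sphere (0:ℂ) r₂) ≤
          (M r₁ * ((1-r₁)^2/r₁)) / ((1-r₂)^2/r₂) := by
        apply Real.sSup_le
        · rintro x ⟨z, hz, rfl⟩
          rw [mem_sphere_zero_iff_norm] at hz
          set u : ℂ := (r₂⁻¹ : ℝ) • z with hu_def
          have hu : ‖u‖ = 1 := by
            rw [hu_def, norm_smul, hz, Real.norm_eq_abs, abs_of_pos (inv_pos.2 hr2.1)]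
            exact inv_mul_cancel₀ (ne_of_gt hr2.1)
          have hzu : (r₂:ℝ) • u = z := by
            rw [hu_def, smul_smul, mul_inv_cancel₀ (ne_of_gt hr2.1), one_smul]
          have hk := keyIneq f hf h0 h1 hnz hre hu hr1.1 h12 hr2.2
          rw [hzu] at hk
          have hb : ‖f ((r₁:ℝ) • u)‖ ≤ M r₁ := by
            apply hMge r₁ hr1
            rw [mem_sphere_zero_iff_norm, norm_smul, hu, mul_one, Real.norm_eq_abs,
              abs_of_pos hr1.1]
          rw [le_div_iff₀ hc]
          calc ‖f z‖ * ((1-r₂)^2/r₂) ≤ ‖f ((r₁:ℝ) • u)‖ * ((1-r₁)^2/r₁) := hk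
            _ ≤ M r₁ * ((1-r₁)^2/r₁) := mul_le_mul_of_nonneg_right hb hc1.le
        · exact div_nonneg (mul_nonneg (hM0 r₁ hr1) hc1.le) hc.le
      rw [hM r₂]
      exact (le_div_iff₀ hc).1 hsup
    rw [hφ r₂, hφ r₁]
    calc (1-r₂)^2 * M r₂ / r₂ = M r₂ * ((1-r₂)^2/r₂) := by ring
      _ ≤ M r₁ * ((1-r₁)^2/r₁) := hC
      _ = (1-r₁)^2 * M r₁ / r₁ := by ring
  have hanti : AntitoneOn φ (Ioo (0:ℝ) 1) := fun r₁ hh1 r₂ hh2 h12 => hkey r₁ hh1 r₂ hh2 h12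
  have hφ0 : ∀ r ∈ Ioo (0:ℝ) 1, 0 ≤ φ r := by
    intro r hr; rw [hφ r]
    exact div_nonneg (mul_nonneg (by positivity) (hM0 r hr)) hr.1.le
  have hbdd2 : BddBelow (φ '' Ioo (0:ℝ) 1) := ⟨0, by rintro x ⟨s, hs, rfl⟩; exact hφ0 s hs⟩
  have hne : (Ioo (0:ℝ) 1).Nonempty := ⟨1/2, by norm_num⟩
  refine ⟨hanti, sInf (φ '' Ioo (0:ℝ) 1), ⟨?_, ?_⟩, ?_⟩
  · exact le_csInf (hne.image φ) (by rintro b ⟨s, hs, rfl⟩; exact hφ0 s hs)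
  · -- sInf ≤ 1
    have hh : DifferentiableOn ℂ (dslope f 0) (ball 0 1) :=
      (Complex.differentiableOn_dslope (ball_mem_nhds _ one_pos)).2 hf
    have hcont : ContinuousAt (dslope f 0) 0 :=
      ((hh 0 (by simp)).differentiableAt (isOpen_ball.mem_nhds (by simp))).continuousAt
    apply le_of_forall_pos_le_add
    intro ε hε
    obtain ⟨δ, hδpos, hδ⟩ := Metric.continuousAt_iff.1 hcont ε hε
    set r := min (δ/2) (1/2) with hr_def
    have hrpos : 0 < r := lt_min (by linarith) (by norm_num)
    have hr : r ∈ Ioo (0:ℝ) 1 :=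
      ⟨hrpos, lt_of_le_of_lt (min_le_right _ _) (by norm_num)⟩
    have hMr : M r ≤ r * (1 + ε) := by
      rw [hM r]
      apply Real.sSup_le
      · rintro x ⟨z, hz, rfl⟩
        rw [mem_sphere_zero_iff_norm] at hz
        have hdz : dist z 0 < δ := by
          rw [dist_zero_right, hz]
          calc r ≤ δ/2 := min_le_left _ _
            _ < δ := by linarith
        have hd := hδ hdz
        have h00 : dslope f 0 0 = 1 := by rw [dslope_same, h1]
        rw [h00] at hd
        have hnorm : ‖dslope f 0 z‖ ≤ 1 + ε := by
          have h5 : ‖dslope f 0 z‖ - ‖(1:ℂ)‖ ≤ ‖dslope f 0 z - 1‖ :=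
            norm_sub_norm_le _ _
          rw [dist_eq_norm] at hd
          simp only [norm_one] at h5
          linarith
        have hfz : f z = z * dslope f 0 z := by
          have := sub_smul_dslope f 0 z
          rw [h0, sub_zero, sub_zero, smul_eq_mul] at this
          exact this.symm
        show ‖f z‖ ≤ r * (1 + ε)
        rw [hfz, norm_mul, hz]
        exact mul_le_mul_of_nonneg_left hnorm hrpos.le
      · exact mul_nonneg hrpos.le (by linarith)
    have hφr : φ r ≤ 1 + ε := by
      rw [hφ r]
      have e : (1-r)^2 * (r*(1+ε)) / r = (1-r)^2 * (1+ε) := by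
        field_simp
      have step1 : (1-r)^2 * M r / r ≤ (1-r)^2 * (r*(1+ε)) / r := by
        gcongr
      have step2 : (1-r)^2 * (1+ε) ≤ 1+ε := by
        nlinarith [mul_nonneg (mul_nonneg hrpos.le (by linarith [hr.2] : (0:ℝ) ≤ 2 - r))
          (by linarith : (0:ℝ) ≤ 1+ε)]
      calc (1-r)^2 * M r / r ≤ (1-r)^2 * (r*(1+ε)) / r := step1
        _ = (1-r)^2 * (1+ε) := e
        _ ≤ 1+ε := step2
    calc sInf (φ '' Ioo (0:ℝ) 1) ≤ φ r := csInf_le hbdd2 ⟨r, hr, rfl⟩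
      _ ≤ 1 + ε := hφr
  · exact AntitoneOn.tendsto_nhdsWithin_Ioo_left hne hanti hbdd2
end

section
/- Let f be holomorphic on the unit disk with f'(0) = 1 and suppose the image f(𝔻) is a convex set. Then f(𝔻) contains the open ball of radius 1/2 centered at f(0). -/
open Complex Metric Set

/-- Key geometric fact: a point strictly inside a half-plane `re < T` is strictly closer
to any point of the half-plane than its reflection across the boundary line is. -/
lemma aux_halfplane_lt (s s₀ : ℂ) (T : ℝ) (hs : s.re < T) (h0 : s₀.re < T) :
    ‖s - s₀‖ < ‖s - (((2 * T : ℝ) : ℂ) - (starRingEnd ℂ) s₀)‖ := by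
  have h2 : Complex.normSq (s - s₀) <
      Complex.normSq (s - (((2 * T : ℝ) : ℂ) - (starRingEnd ℂ) s₀)) := by
    simp only [Complex.normSq_apply, Complex.sub_re, Complex.sub_im, Complex.conj_re,
      Complex.conj_im, Complex.ofReal_re, Complex.ofReal_im]
    nlinarith [sq_nonneg (s.im - s₀.im)]
  have := Real.sqrt_lt_sqrt (Complex.normSq_nonneg _) h2
  simpa [Complex.norm_def] using this

theorem stmt18 (f : ℂ → ℂ)
    (hf : DifferentiableOn ℂ f (ball (0:ℂ) 1))
    (h1 : deriv f 0 = 1)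
    (hconv : Convex ℝ (f '' ball (0:ℂ) 1)) :
    ball (f 0) (1/2) ⊆ f '' ball (0:ℂ) 1 := by
  intro w hw
  by_contra hw'
  -- the image is open
  have h0mem : (0 : ℂ) ∈ ball (0:ℂ) 1 := by simp
  have han : AnalyticOnNhd ℂ f (ball (0:ℂ) 1) := hf.analyticOnNhd isOpen_ball
  have hopen : IsOpen (f '' ball (0:ℂ) 1) := by
    rcases han.is_constant_or_isOpen (convex_ball (0:ℂ) 1).isPreconnected with ⟨v, hv⟩ | h
    · exfalso
      have hev : f =ᶠ[nhds (0:ℂ)] fun _ => v := by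
        filter_upwards [isOpen_ball.mem_nhds h0mem] with z hz using hv z hz
      have : deriv f 0 = 0 := by
        rw [hev.deriv_eq]; simp
      rw [h1] at this; exact one_ne_zero this
    · exact h _ subset_rfl isOpen_ball
  -- separate w from the image
  obtain ⟨ℓ, hℓ⟩ := geometric_hahn_banach_open_point hconv hopen hw'
  set c : ℂ := ⟨ℓ 1, ℓ I⟩ with hc
  have key : ∀ z : ℂ, ℓ z = ((starRingEnd ℂ) c * z).re := by
    intro z
    have hz : z = z.re • (1 : ℂ) + z.im • I := by
      apply Complex.ext <;> simp
    calc ℓ z = ℓ (z.re • (1 : ℂ) + z.im • I) := by rw [← hz]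
      _ = z.re * ℓ 1 + z.im * ℓ I := by
          rw [map_add, map_smul, map_smul]; simp
      _ = ((starRingEnd ℂ) c * z).re := by
          simp [Complex.mul_re, hc, mul_comm]
  set a : ℂ := f 0 with ha
  set T : ℝ := ((starRingEnd ℂ) c * w).re with hT
  set s₀ : ℂ := (starRingEnd ℂ) c * a with hs₀
  have hlt : ∀ z ∈ ball (0:ℂ) 1, ((starRingEnd ℂ) c * f z).re < T := by
    intro z hz
    have := hℓ (f z) (mem_image_of_mem f hz)
    rwa [key, key] at this
  have ha_lt : s₀.re < T := hlt 0 h0mem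
  have hcne : c ≠ 0 := by
    intro h
    have := ha_lt
    rw [hs₀, hT, h] at this
    simp at this
  set r : ℂ := ((2 * T : ℝ) : ℂ) - (starRingEnd ℂ) s₀ with hr
  set g : ℂ → ℂ := fun z => ((starRingEnd ℂ) c * f z - s₀) / ((starRingEnd ℂ) c * f z - r)
    with hg
  -- the denominator never vanishes on the ball
  have hden : ∀ z ∈ ball (0:ℂ) 1, (starRingEnd ℂ) c * f z - r ≠ 0 := by
    intro z hz h
    have hre : ((starRingEnd ℂ) c * f z - r).re < 0 := by
      have h1z := hlt z hz
      simp only [hr, Complex.sub_re, Complex.ofReal_re, Complex.conj_re]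
      linarith
    rw [h] at hre; simp at hre
  -- g is differentiable on the ball
  have hgd : DifferentiableOn ℂ g (ball (0:ℂ) 1) := by
    apply DifferentiableOn.div
    · exact ((hf.const_mul _).sub_const _)
    · exact ((hf.const_mul _).sub_const _)
    · exact hden
  have hg0 : g 0 = 0 := by
    simp [hg, hs₀, ha]
  -- g maps the ball into the unit ball
  have hmaps : MapsTo g (ball (0:ℂ) 1) (ball (g 0) 1) := by
    intro z hz
    rw [hg0, mem_ball, dist_zero_right, hg]
    have hlt' := aux_halfplane_lt ((starRingEnd ℂ) c * f z) s₀ T (hlt z hz) ha_lt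
    rw [← hr] at hlt'
    have hpos : (0:ℝ) < ‖(starRingEnd ℂ) c * f z - r‖ :=
      (norm_nonneg _).trans_lt hlt'
    rw [norm_div, div_lt_one hpos]
    exact hlt'
  -- Schwarz lemma
  have hschwarz : ‖deriv g 0‖ ≤ 1 := by
    have := Complex.norm_deriv_le_div_of_mapsTo_ball hgd (hmaps.mono_right ball_subset_closedBall) one_pos
    simpa using this
  -- compute deriv g 0
  have hfd : HasDerivAt f 1 0 := by
    have := (hf.differentiableAt (isOpen_ball.mem_nhds h0mem)).hasDerivAt
    rwa [h1] at this
  have hD0 : (starRingEnd ℂ) c * f 0 - r ≠ 0 := hden 0 h0mem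
  have hs₀r : s₀ - r ≠ 0 := hD0
  have hderiv : deriv g 0 = (starRingEnd ℂ) c / (s₀ - r) := by
    have hN : HasDerivAt (fun z => (starRingEnd ℂ) c * f z - s₀) ((starRingEnd ℂ) c) 0 := by
      simpa using ((hfd.const_mul ((starRingEnd ℂ) c)).sub_const s₀)
    have hD : HasDerivAt (fun z => (starRingEnd ℂ) c * f z - r) ((starRingEnd ℂ) c) 0 := by
      simpa using ((hfd.const_mul ((starRingEnd ℂ) c)).sub_const r)
    have := hN.div hD hD0
    rw [show deriv g 0 = deriv ((fun z => (starRingEnd ℂ) c * f z - s₀) / fun z => (starRingEnd ℂ) c * f z - r) 0 from rfl, this.deriv]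
    have hEq : (starRingEnd ℂ) c * f 0 = s₀ := by rw [hs₀, ha]
    rw [hEq, sub_self, zero_mul, sub_zero]
    field_simp
  -- now derive the contradiction
  have habs : ‖(starRingEnd ℂ) c / (s₀ - r)‖ ≤ 1 := by
    rw [← hderiv]; exact hschwarz
  have hsr : s₀ - r = ((2 * s₀.re - 2 * T : ℝ) : ℂ) := by
    rw [hr]
    apply Complex.ext <;> simp [Complex.sub_re, Complex.sub_im] <;> ring
  have habs2 : ‖s₀ - r‖ = 2 * T - 2 * s₀.re := by
    rw [hsr, Complex.norm_real, Real.norm_eq_abs, abs_of_neg (by linarith)]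
    ring
  have hcpos : 0 < ‖c‖ := by
    simpa [norm_pos_iff] using hcne
  have hle : ‖c‖ ≤ 2 * T - 2 * s₀.re := by
    rw [norm_div, Complex.norm_conj, habs2, div_le_one (by linarith)] at habs
    exact habs
  -- but T - s₀.re = Re(conj c * (w - a)) ≤ |c| * |w - a| < |c|/2
  have hTs : T - s₀.re = ((starRingEnd ℂ) c * (w - a)).re := by
    rw [hT, hs₀, mul_sub, Complex.sub_re]
  have hwa : ‖w - a‖ < 1 / 2 := by
    rwa [mem_ball, Complex.dist_eq] at hw
  have hfinal : T - s₀.re < ‖c‖ * (1 / 2) := by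
    rw [hTs]
    calc ((starRingEnd ℂ) c * (w - a)).re ≤ ‖(starRingEnd ℂ) c * (w - a)‖ :=
          Complex.re_le_norm _
      _ = ‖c‖ * ‖w - a‖ := by rw [norm_mul, Complex.norm_conj]
      _ < ‖c‖ * (1 / 2) := by
          exact mul_lt_mul_of_pos_left hwa hcpos
  linarith
end

section
/- Let z₀, b be in the open unit disk and let f be holomorphic on the unit disk with |f| < 1, f(0)=0, and f'(0)=b. Then |f(z₀) − c| ≤ r, where c = z₀ b (1−|z₀|²)/(1−|z₀ b|²) and r = |z₀|² (1−|b|²)/(1−|z₀ b|²) (Rogosinski's lemma). -/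
open Complex Metric Set

lemma exsq (z : ℂ) : ‖z‖^2 = z.re^2 + z.im^2 := by
  rw [Complex.sq_norm, Complex.normSq_apply]; ring

lemma disk (u b : ℂ) (t : ℝ) (ht0 : 0 ≤ t) (ht : t < 1) (hb : ‖b‖ < 1)
    (h : ‖u - b‖ ≤ t * ‖1 - (starRingEnd ℂ) b * u‖) :
    ‖u - b * ((1 - t^2 : ℝ) : ℂ) / ((1 - t^2 * ‖b‖^2 : ℝ) : ℂ)‖ ≤
      t * (1 - ‖b‖^2) / (1 - t^2 * ‖b‖^2) := by
  have hb0 : 0 ≤ ‖b‖ := norm_nonneg b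
  have htb : t * ‖b‖ < 1 := by nlinarith
  have hD : 0 < 1 - t^2 * ‖b‖^2 := by nlinarith [mul_nonneg ht0 hb0]
  have hyp2 : ‖u - b‖^2 ≤ t^2 * ‖1 - (starRingEnd ℂ) b * u‖^2 := by
    have := mul_self_le_mul_self (norm_nonneg (u - b)) h
    nlinarith [norm_nonneg (1 - (starRingEnd ℂ) b * u)]
  have key : ‖((1 - t^2 * ‖b‖^2 : ℝ) : ℂ) * u - b * ((1 - t^2 : ℝ) : ℂ)‖ ≤ t * (1 - ‖b‖^2) := by
    have hr : 0 ≤ t * (1 - ‖b‖^2) := mul_nonneg ht0 (by nlinarith)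
    rw [← Real.sqrt_sq (norm_nonneg _), ← Real.sqrt_sq hr]
    apply Real.sqrt_le_sqrt
    rw [exsq] at hyp2 ⊢
    rw [exsq] at hyp2
    have hbsq : ‖b‖^2 = b.re^2 + b.im^2 := exsq b
    have hD' : 0 ≤ 1 - t^2 * (b.re^2 + b.im^2) := by rw [← hbsq]; exact hD.le
    simp only [Complex.sub_re, Complex.sub_im, Complex.mul_re, Complex.mul_im,
      Complex.one_re, Complex.one_im, Complex.conj_re, Complex.conj_im,
      Complex.ofReal_re, Complex.ofReal_im, hbsq] at hyp2 ⊢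
    nlinarith [mul_nonneg hD' (sub_nonneg.2 hyp2)]
  have hDc : ((1 - t^2 * ‖b‖^2 : ℝ) : ℂ) ≠ 0 := Complex.ofReal_ne_zero.mpr hD.ne'
  set A : ℂ := ((1 - t^2 : ℝ) : ℂ) with hA
  set Dc : ℂ := ((1 - t^2 * ‖b‖^2 : ℝ) : ℂ) with hDcdef
  have heq : u - b * A / Dc = (Dc * u - b * A) / Dc := by
    field_simp
  rw [heq, norm_div, hDcdef, Complex.norm_real, Real.norm_eq_abs, abs_of_pos hD]
  gcongr

lemma mobius (b w : ℂ) (hw : ‖w‖ ≤ 1) (hb : ‖b‖ ≤ 1) :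
    ‖w - b‖ ≤ ‖1 - (starRingEnd ℂ) b * w‖ := by
  have hw2 : w.re^2 + w.im^2 ≤ 1 := by rw [← exsq]; nlinarith [norm_nonneg w]
  have hb2 : b.re^2 + b.im^2 ≤ 1 := by rw [← exsq]; nlinarith [norm_nonneg b]
  rw [Complex.norm_def, Complex.norm_def]
  apply Real.sqrt_le_sqrt
  simp only [Complex.normSq_apply, Complex.sub_re, Complex.sub_im, Complex.mul_re, Complex.mul_im,
    Complex.one_re, Complex.one_im, Complex.conj_re, Complex.conj_im]
  nlinarith [mul_nonneg (sub_nonneg.2 hw2) (sub_nonneg.2 hb2)]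

theorem stmt19 (z₀ b : ℂ) (hz₀ : ‖z₀‖ < 1) (hb : ‖b‖ < 1) (f : ℂ → ℂ)
    (hf : DifferentiableOn ℂ f (ball (0:ℂ) 1))
    (hlt : ∀ z ∈ ball (0:ℂ) 1, ‖f z‖ < 1)
    (h0 : f 0 = 0) (h1 : deriv f 0 = b) :
    ‖f z₀ - z₀ * b * ((1 - ‖z₀‖ ^ 2 : ℝ) : ℂ) / ((1 - ‖z₀ * b‖ ^ 2 : ℝ) : ℂ)‖ ≤
      ‖z₀‖ ^ 2 * (1 - ‖b‖ ^ 2) / (1 - ‖z₀ * b‖ ^ 2) := by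
  rcases eq_or_ne z₀ 0 with rfl | hz
  · simp [h0]
  have hz₀m : z₀ ∈ ball (0:ℂ) 1 := mem_ball_zero_iff.2 hz₀
  set g := dslope f 0 with hgdef
  have hgd : DifferentiableOn ℂ g (ball 0 1) :=
    (Complex.differentiableOn_dslope (ball_mem_nhds _ one_pos)).2 hf
  have hg0 : g 0 = b := by rw [hgdef, dslope_same, h1]
  have hmaps : MapsTo f (ball (0:ℂ) 1) (ball (f 0) 1) := fun z hzb => by
    rw [h0, mem_ball_zero_iff]; exact hlt z hzb
  have hgle : ∀ z ∈ ball (0:ℂ) 1, ‖g z‖ ≤ 1 := fun z hzb => by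
    simpa using Complex.norm_dslope_le_div_of_mapsTo_ball hf (hmaps.mono_right ball_subset_closedBall) hzb
  have hden : ∀ z ∈ ball (0:ℂ) 1, (1 : ℂ) - (starRingEnd ℂ) b * g z ≠ 0 := by
    intro z hzb he
    have h1' : ‖(starRingEnd ℂ) b * g z‖ < 1 := by
      rw [norm_mul, RCLike.norm_conj]
      calc ‖b‖ * ‖g z‖ ≤ ‖b‖ * 1 := by
            exact mul_le_mul_of_nonneg_left (hgle z hzb) (norm_nonneg b)
        _ < 1 := by simpa using hb
    have : (starRingEnd ℂ) b * g z = 1 := by linear_combination -he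
    rw [this] at h1'; simp at h1'
  set H : ℂ → ℂ := fun z => (g z - b) / (1 - (starRingEnd ℂ) b * g z) with hHdef
  have hHd : DifferentiableOn ℂ H (ball 0 1) := by
    apply DifferentiableOn.div
    · exact hgd.sub (differentiableOn_const b)
    · exact (differentiableOn_const 1).sub ((differentiableOn_const _).mul hgd)
    · exact hden
  have hH0 : H 0 = 0 := by
    rw [hHdef]; simp only [hg0]; rw [sub_self, zero_div]
  have hHle : ∀ z ∈ ball (0:ℂ) 1, ‖H z‖ ≤ 1 := by
    intro z hzb
    rw [hHdef]
    simp only [norm_div]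
    rcases eq_or_ne (1 - (starRingEnd ℂ) b * g z) 0 with he | he
    · rw [he, norm_zero, div_zero]; norm_num
    · rw [div_le_one (norm_pos_iff.2 he)]
      exact mobius b (g z) (hgle z hzb) hb.le
  have hHz : ‖H z₀‖ ≤ ‖z₀‖ := by
    refine le_of_forall_pos_le_add fun ε hε => ?_
    have hmapsH : MapsTo H (ball (0:ℂ) 1) (ball (H 0) (1 + ε)) := fun z hzb => by
      rw [hH0, mem_ball_zero_iff]
      exact lt_of_le_of_lt (hHle z hzb) (by linarith)
    have hd := Complex.dist_le_div_mul_dist_of_mapsTo_ball hHd (hmapsH.mono_right ball_subset_closedBall) hz₀m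
    rw [hH0, dist_zero_right, dist_zero_right, div_one] at hd
    nlinarith [hz₀, norm_nonneg z₀, norm_nonneg (H z₀)]
  have hkey : ‖g z₀ - b‖ ≤ ‖z₀‖ * ‖1 - (starRingEnd ℂ) b * g z₀‖ := by
    rw [hHdef] at hHz
    simp only [norm_div] at hHz
    rw [div_le_iff₀ (norm_pos_iff.2 (hden z₀ hz₀m))] at hHz
    linarith [hHz]
  have hdisk := disk (g z₀) b ‖z₀‖ (norm_nonneg z₀) hz₀ hb hkey
  have hfz : f z₀ = z₀ * g z₀ := by
    rw [hgdef, dslope_of_ne _ hz, slope_def_field]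
    field_simp [h0]
    rw [h0]; ring
  have hnz : ‖z₀ * b‖^2 = ‖z₀‖^2 * ‖b‖^2 := by rw [norm_mul]; ring
  have htb : ‖z₀‖ * ‖b‖ < 1 := by nlinarith [norm_nonneg z₀, norm_nonneg b]
  have hD : 0 < 1 - ‖z₀‖^2 * ‖b‖^2 := by
    nlinarith [mul_nonneg (norm_nonneg z₀) (norm_nonneg b), htb]
  calc ‖f z₀ - z₀ * b * ((1 - ‖z₀‖ ^ 2 : ℝ) : ℂ) / ((1 - ‖z₀ * b‖ ^ 2 : ℝ) : ℂ)‖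
      = ‖z₀‖ * ‖g z₀ - b * ((1 - ‖z₀‖^2 : ℝ) : ℂ) / ((1 - ‖z₀‖^2 * ‖b‖^2 : ℝ) : ℂ)‖ := by
        rw [← norm_mul]; congr 1; rw [hfz, hnz]; ring
    _ ≤ ‖z₀‖ * (‖z₀‖ * (1 - ‖b‖^2) / (1 - ‖z₀‖^2 * ‖b‖^2)) := by
        exact mul_le_mul_of_nonneg_left hdisk (norm_nonneg z₀)
    _ = ‖z₀‖ ^ 2 * (1 - ‖b‖ ^ 2) / (1 - ‖z₀ * b‖ ^ 2) := by rw [hnz]; ring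
end
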